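/- Let t₁ and t₂ be red-black trees and a a key. Then the cost of Join(t₁, a, t₂), i.e., the number of recursive calls to JoinRight (or symmetrically JoinLeft) it performs, is at most 1 + 2(⌈log₂(1 + max(|t₁|, |t₂|))⌉ − ⌊(⌈log₂(1 + min(|t₁|, |t₂|))⌉ − 1)/2⌋), where |t| denotes the number of internal (key-carrying) nodes of t. -/

import Mathlib

/-- Node colors for red-black trees. -/
inductive Color where
  | red : Color
  | black : Color
deriving DecidableEq

/-- Plain binary trees with colored nodes. -/
inductive RBTree (α : Type) where
  | leaf : RBTree α
  | node : Color → RBTree α → α → RBTree α → RBTree α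

namespace RBTree

variable {α : Type}

/-- The black height of a tree (computed along the left spine). -/
def blackHeight : RBTree α → ℕ
  | leaf => 0
  | node Color.red l _ _ => blackHeight l
  | node Color.black l _ _ => blackHeight l + 1

/-- The color of the root; leaves count as black. -/
def rootColor : RBTree α → Color
  | leaf => Color.black
  | node c _ _ _ => c

/-- In-order traversal. -/
def inorder : RBTree α → List α
  | leaf => []
  | node _ l a r => inorder l ++ a :: inorder r

/-- Number of internal (key-carrying) nodes. -/
def size : RBTree α → ℕ
  | leaf => 0
  | node _ l _ r => size l + 1 + size r

/-- `IsRBT t y n` means `t` is a valid red-black tree with root color `y`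
and black height `n`, mirroring the indexed inductive family `irbt`. -/
inductive IsRBT : RBTree α → Color → ℕ → Prop where
  | leaf : IsRBT leaf Color.black 0
  | red {t₁ t₂ : RBTree α} {n : ℕ} (a : α) :
      IsRBT t₁ Color.black n → IsRBT t₂ Color.black n →
      IsRBT (node Color.red t₁ a t₂) Color.red n
  | black {t₁ t₂ : RBTree α} {y₁ y₂ : Color} {n : ℕ} (a : α) :
      IsRBT t₁ y₁ n → IsRBT t₂ y₂ n →
      IsRBT (node Color.black t₁ a t₂) Color.black (n + 1)

end RBTree
namespace RBTree

variable {α : Type}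

/-- The cost of `JoinRight`: the number of recursive invocations of
`JoinRight` performed (each recursive call incurs unit cost; the
non-recursive rebalancing cases incur zero cost). -/
def joinRightCost : RBTree α → α → RBTree α → ℕ
  | leaf, _, _ => 0
  | node Color.red _ _ t₁₂, a, t₂ => 1 + joinRightCost t₁₂ a t₂
  | node Color.black t₁₁ a₁ t₁₂, a, t₂ =>
      if blackHeight (node Color.black t₁₁ a₁ t₁₂) = blackHeight t₂ + 1 then 0
      else 1 + joinRightCost t₁₂ a t₂

/-- The cost of `JoinLeft`, symmetrically. -/
def joinLeftCost : RBTree α → α → RBTree α → ℕ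
  | _, _, leaf => 0
  | t₁, a, node Color.red t₂₁ _ _ => 1 + joinLeftCost t₁ a t₂₁
  | t₁, a, node Color.black t₂₁ a₂ t₂₂ =>
      if blackHeight (node Color.black t₂₁ a₂ t₂₂) = blackHeight t₁ + 1 then 0
      else 1 + joinLeftCost t₁ a t₂₁

/-- The cost of `Join`: the number of recursive invocations of
`JoinRight`/`JoinLeft` performed (the equal-height case and the final
recoloring incur zero cost). -/
def joinCost (t₁ : RBTree α) (a : α) (t₂ : RBTree α) : ℕ :=
  if blackHeight t₂ < blackHeight t₁ then joinRightCost t₁ a t₂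
  else if blackHeight t₁ < blackHeight t₂ then joinLeftCost t₁ a t₂
  else 0

end RBTree

namespace RBTree

variable {α : Type}

theorem blackHeight_eq' {t : RBTree α} {y : Color} {n : ℕ} (h : IsRBT t y n) :
    t.blackHeight = n := by
  induction h with
  | leaf => rfl
  | red a h1 h2 ih1 ih2 => simpa [blackHeight] using ih1
  | black a h1 h2 ih1 ih2 => simp [blackHeight, ih1]

theorem size_lower {t : RBTree α} {y : Color} {n : ℕ} (h : IsRBT t y n) :
    2 ^ n ≤ t.size + 1 := by
  induction h with
  | leaf => simp [size]
  | red a h1 h2 ih1 ih2 => simp only [size]; omega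
  | black a h1 h2 ih1 ih2 =>
    simp only [size]
    rw [pow_succ]
    omega

theorem ifbb : (if Color.black = Color.black then (1:ℕ) else 0) = 1 := rfl
theorem ifrb : (if Color.red = Color.black then (1:ℕ) else 0) = 0 := rfl
theorem ifbr : (if Color.black = Color.red then (1:ℕ) else 0) = 0 := rfl
theorem ifrr : (if Color.red = Color.red then (1:ℕ) else 0) = 1 := rfl

theorem size_upper' {t : RBTree α} {y : Color} {n : ℕ} (h : IsRBT t y n) :
    t.size + 1 ≤ 2 ^ (2 * n + if y = Color.red then 1 else 0) := by
  induction h with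
  | leaf => simp [size]
  | @red t₁ t₂ n a h1 h2 ih1 ih2 =>
    simp only [size] at *
    rw [ifbr, add_zero] at ih1 ih2
    rw [if_pos trivial, pow_succ]
    omega
  | @black t₁ t₂ y₁ y₂ n a h1 h2 ih1 ih2 =>
    simp only [size] at *
    rw [ifbr, add_zero]
    have e1 : t₁.size + 1 ≤ 2 ^ (2 * n + 1) :=
      ih1.trans (Nat.pow_le_pow_right (by norm_num) (by split <;> omega))
    have e2 : t₂.size + 1 ≤ 2 ^ (2 * n + 1) :=
      ih2.trans (Nat.pow_le_pow_right (by norm_num) (by split <;> omega))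
    rw [show 2 * (n + 1) = (2 * n + 1) + 1 by ring, pow_succ]
    omega

theorem size_upper {t : RBTree α} {y : Color} {n : ℕ} (h : IsRBT t y n) :
    t.size + 1 ≤ 2 ^ (2 * n + 1) :=
  (size_upper' h).trans (Nat.pow_le_pow_right (by norm_num) (by split <;> omega))

theorem joinRightCost_le {t₂ : RBTree α} {n₂ : ℕ} (ht₂ : t₂.blackHeight = n₂) (a : α) :
    ∀ {t₁ : RBTree α} {y₁ : Color} {n₁ : ℕ}, IsRBT t₁ y₁ n₁ → n₂ < n₁ →
      joinRightCost t₁ a t₂ + (if y₁ = Color.black then 1 else 0) ≤ 2 * (n₁ - n₂) := by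
  intro t₁ y₁ n₁ h
  induction h with
  | leaf => intro h; omega
  | @red l r n b h1 h2 ih1 ih2 =>
    intro hlt
    have h2' : joinRightCost r a t₂ + 1 ≤ 2 * (n - n₂) := by
      have := ih2 hlt; rw [ifbb] at this; exact this
    show 1 + joinRightCost r a t₂ + (if Color.red = Color.black then 1 else 0) ≤ _
    rw [ifrb]
    omega
  | @black l r c₁ c₂ n b h1 h2 ih1 ih2 =>
    intro hlt
    have hbh : blackHeight (node Color.black l b r) = n + 1 :=
      blackHeight_eq' (IsRBT.black b h1 h2)
    show (if blackHeight (node Color.black l b r) = blackHeight t₂ + 1 then 0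
        else 1 + joinRightCost r a t₂) + (if Color.black = Color.black then 1 else 0) ≤ _
    rw [ifbb]
    by_cases hcnd : blackHeight (node Color.black l b r) = blackHeight t₂ + 1
    · rw [if_pos hcnd]; omega
    · rw [if_neg hcnd]
      have hn : n₂ < n := by rw [hbh, ht₂] at hcnd; omega
      have h2' := ih2 hn
      have hr : joinRightCost r a t₂ ≤ 2 * (n - n₂) := by split at h2' <;> omega
      omega

theorem joinLeftCost_le {t₁ : RBTree α} {n₁ : ℕ} (ht₁ : t₁.blackHeight = n₁) (a : α) :
    ∀ {t₂ : RBTree α} {y₂ : Color} {n₂ : ℕ}, IsRBT t₂ y₂ n₂ → n₁ < n₂ →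
      joinLeftCost t₁ a t₂ + (if y₂ = Color.black then 1 else 0) ≤ 2 * (n₂ - n₁) := by
  intro t₂ y₂ n₂ h
  induction h with
  | leaf => intro h; omega
  | @red l r n b h1 h2 ih1 ih2 =>
    intro hlt
    have h1' : joinLeftCost t₁ a l + 1 ≤ 2 * (n - n₁) := by
      have := ih1 hlt; rw [ifbb] at this; exact this
    show 1 + joinLeftCost t₁ a l + (if Color.red = Color.black then 1 else 0) ≤ _
    rw [ifrb]
    omega
  | @black l r c₁ c₂ n b h1 h2 ih1 ih2 =>
    intro hlt
    have hbh : blackHeight (node Color.black l b r) = n + 1 :=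
      blackHeight_eq' (IsRBT.black b h1 h2)
    show (if blackHeight (node Color.black l b r) = blackHeight t₁ + 1 then 0
        else 1 + joinLeftCost t₁ a l) + (if Color.black = Color.black then 1 else 0) ≤ _
    rw [ifbb]
    by_cases hcnd : blackHeight (node Color.black l b r) = blackHeight t₁ + 1
    · rw [if_pos hcnd]; omega
    · rw [if_neg hcnd]
      have hn : n₁ < n := by rw [hbh, ht₁] at hcnd; omega
      have h1' := ih1 hn
      have hl : joinLeftCost t₁ a l ≤ 2 * (n - n₁) := by split at h1' <;> omega
      omega

end RBTree
/-- **User-facing cost of Join.**  Let `t₁` and `t₂` be red-black trees and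
`a` a key.  Then the cost of `Join(t₁, a, t₂)` — the number of recursive
calls to `JoinRight` (or symmetrically `JoinLeft`) it performs — is at most
`1 + 2 * (⌈log₂ (1 + max |t₁| |t₂|)⌉ - ⌊(⌈log₂ (1 + min |t₁| |t₂|)⌉ - 1) / 2⌋)`,
where `|t|` is the number of internal (key-carrying) nodes of `t`. -/
theorem join_cost_bound_nodes {α : Type} {y₁ y₂ : Color} {n₁ n₂ : ℕ}
    (t₁ : RBTree α) (a : α) (t₂ : RBTree α)
    (h₁ : RBTree.IsRBT t₁ y₁ n₁) (h₂ : RBTree.IsRBT t₂ y₂ n₂) :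
    RBTree.joinCost t₁ a t₂ ≤
      1 + 2 * (Nat.clog 2 (1 + max t₁.size t₂.size) -
        (Nat.clog 2 (1 + min t₁.size t₂.size) - 1) / 2) := by
  have hb1 := RBTree.blackHeight_eq' h₁
  have hb2 := RBTree.blackHeight_eq' h₂
  have hl1 := RBTree.size_lower h₁
  have hl2 := RBTree.size_lower h₂
  have hu1 := RBTree.size_upper h₁
  have hu2 := RBTree.size_upper h₂
  set C := Nat.clog 2 (1 + max t₁.size t₂.size) with hC
  set c := Nat.clog 2 (1 + min t₁.size t₂.size) with hc
  have hn1C : n₁ ≤ C := by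
    calc n₁ = Nat.clog 2 (2 ^ n₁) := (Nat.clog_pow 2 n₁ (by norm_num)).symm
    _ ≤ C := Nat.clog_mono_right 2 (by omega)
  have hn2C : n₂ ≤ C := by
    calc n₂ = Nat.clog 2 (2 ^ n₂) := (Nat.clog_pow 2 n₂ (by norm_num)).symm
    _ ≤ C := Nat.clog_mono_right 2 (by omega)
  have hc1 : c ≤ 2 * n₁ + 1 := by
    rw [hc, Nat.clog_le_iff_le_pow (by norm_num : 1 < 2)]
    calc 1 + min t₁.size t₂.size ≤ t₁.size + 1 := by omega
    _ ≤ 2 ^ (2 * n₁ + 1) := hu1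
  have hc2 : c ≤ 2 * n₂ + 1 := by
    rw [hc, Nat.clog_le_iff_le_pow (by norm_num : 1 < 2)]
    calc 1 + min t₁.size t₂.size ≤ t₂.size + 1 := by omega
    _ ≤ 2 ^ (2 * n₂ + 1) := hu2
  rw [RBTree.joinCost, hb1, hb2]
  split
  · rename_i hlt
    have := RBTree.joinRightCost_le hb2 a h₁ hlt
    have hjr : RBTree.joinRightCost t₁ a t₂ ≤ 2 * (n₁ - n₂) := by
      split at this <;> omega
    omega
  · split
    · rename_i _ hlt
      have := RBTree.joinLeftCost_le hb1 a h₂ hlt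
      have hjl : RBTree.joinLeftCost t₁ a t₂ ≤ 2 * (n₂ - n₁) := by
        split at this <;> omega
      omega
    · omega
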